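/- (Every cell is dense whp) Tile [0,√n]² into square cells of side r/√5 where r = √(a·ln n/π), and let the nodes be a unit-intensity Poisson point process. If a ≥ 5π/H(5πγ) with strict inequality and γ ∈ (0, 1/(5π)), then with probability tending to 1 as n → ∞, every cell contains at least γ·a·ln n points. -/

import Mathlib

open MeasureTheory ProbabilityTheory
open scoped NNReal ENNReal

noncomputable def H (x : ℝ) : ℝ := x * Real.log x - x + 1

/-- The square `[0,√n]²`. -/
noncomputable def square (n : ℕ) : Set (ℝ × ℝ) :=
  Set.Icc 0 (Real.sqrt n) ×ˢ Set.Icc 0 (Real.sqrt n)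

/-- The axis-aligned square cell with indices `(i, j)` and side length `s`. -/
def cell (s : ℝ) (i j : ℕ) : Set (ℝ × ℝ) :=
  Set.Ico (i * s) ((i + 1) * s) ×ˢ Set.Ico (j * s) ((j + 1) * s)

/-- Index type for the independent sources: the number of points (`none`) and the point
locations (`some i`). -/
def SrcType : Option ℕ → Type
  | none => ℕ
  | some _ => ℝ × ℝ

instance : ∀ j, MeasurableSpace (SrcType j)
  | none => inferInstanceAs (MeasurableSpace ℕ)
  | some _ => inferInstanceAs (MeasurableSpace (ℝ × ℝ))

def src {Ω : Type*} (K : Ω → ℕ) (X : ℕ → Ω → ℝ × ℝ) : ∀ j, Ω → SrcType j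
  | none => K
  | some i => X i

lemma aux_sum_powerset (m : ℕ) (x y : ℝ≥0∞) :
    ∑ S ∈ (Finset.range m).powerset, x ^ S.card * y ^ (m - S.card) = (x + y) ^ m := by
  have := Finset.prod_add (fun _ : ℕ => x) (fun _ : ℕ => y) (Finset.range m)
  simp only [Finset.prod_const] at this
  rw [Finset.card_range] at this
  rw [this]
  refine Finset.sum_congr rfl fun S hS => ?_
  rw [Finset.card_sdiff_of_subset (Finset.mem_powerset.mp hS), Finset.card_range]

lemma natcard_filter (m : ℕ) (pred : ℕ → Prop) [DecidablePred pred] :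
    Nat.card {k : ℕ // k < m ∧ pred k} = ((Finset.range m).filter pred).card := by
  rw [← Nat.card_eq_finsetCard]
  exact Nat.card_congr (Equiv.subtypeEquivRight (by
    intro x; simp [Finset.mem_filter, Finset.mem_range]))

lemma cell_bound {Ω : Type*} [MeasurableSpace Ω] (P : Measure Ω) [IsProbabilityMeasure P]
    (K : Ω → ℕ) (X : ℕ → Ω → ℝ × ℝ)
    (hind : iIndepFun (src K X) P)
    (r : ℝ≥0) (hK : Measure.map K P = poissonMeasure r)
    (C : Set (ℝ × ℝ)) (hC : MeasurableSet C) (p : ℝ) (hp0 : 0 ≤ p) (hp1 : p ≤ 1)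
    (hpX : ∀ k, P (X k ⁻¹' C) = ENNReal.ofReal p)
    (hpXc : ∀ k, P (X k ⁻¹' Cᶜ) = ENNReal.ofReal (1 - p))
    (t s : ℝ) (hs : 0 ≤ s) :
    P {ω | (Nat.card {k : ℕ // k < K ω ∧ X k ω ∈ C} : ℝ) < t}
      ≤ ENNReal.ofReal (Real.exp (s * t + (r : ℝ) * p * (Real.exp (-s) - 1))) := by
  classical
  -- the elementary events
  set E : ℕ → Finset ℕ → Set Ω := fun m S =>
    K ⁻¹' {m} ∩ ⋂ k ∈ Finset.range m, X k ⁻¹' (if k ∈ S then C else Cᶜ) with hE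
  set E' : ℕ → Finset ℕ → Set Ω := fun m S =>
    if (S.card : ℝ) < t then E m S else ∅ with hE'
  -- inclusion
  have hsub : {ω | (Nat.card {k : ℕ // k < K ω ∧ X k ω ∈ C} : ℝ) < t}
      ⊆ ⋃ m : ℕ, ⋃ S ∈ (Finset.range m).powerset, E' m S := by
    intro ω hω
    set m := K ω with hm
    set S := (Finset.range m).filter (fun k => X k ω ∈ C) with hS
    have hcard : Nat.card {k : ℕ // k < K ω ∧ X k ω ∈ C} = S.card := by
      rw [hS, ← hm]; exact natcard_filter m _
    refine Set.mem_iUnion.mpr ⟨m, Set.mem_iUnion₂.mpr ⟨S, Finset.mem_powerset.mpr (Finset.filter_subset _ _), ?_⟩⟩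
    have hlt : (S.card : ℝ) < t := by rw [← hcard]; exact hω
    show ω ∈ (if (S.card : ℝ) < t then E m S else ∅)
    rw [if_pos hlt]
    show K ω ∈ ({m} : Set ℕ) ∧ _
    refine ⟨rfl, Set.mem_iInter₂.mpr fun k hk => ?_⟩
    by_cases hkS : k ∈ S
    · rw [if_pos hkS]; exact (Finset.mem_filter.mp hkS).2
    · rw [if_neg hkS]
      intro hmem
      exact hkS (Finset.mem_filter.mpr ⟨hk, hmem⟩)
  -- measure of an elementary event
  have hmeasE : ∀ m : ℕ, ∀ S ∈ (Finset.range m).powerset,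
      P (E m S) = ENNReal.ofReal (poissonPMFReal r m) *
        (ENNReal.ofReal p) ^ S.card * (ENNReal.ofReal (1 - p)) ^ (m - S.card) := by
    intro m S hS
    have hSsub := Finset.mem_powerset.mp hS
    set sets : ∀ j : Option ℕ, Set (SrcType j) := fun j =>
      match j with
      | none => ({m} : Set ℕ)
      | some k => if k ∈ S then C else Cᶜ with hsets
    set F : Finset (Option ℕ) := insert none ((Finset.range m).image some) with hF
    have hnone : (none : Option ℕ) ∉ (Finset.range m).image some := by simp
    have hprod := hind.measure_inter_preimage_eq_mul (sets := sets) F (fun j _ => by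
      match j with
      | none => exact MeasurableSet.singleton m
      | some k =>
        by_cases hk : k ∈ S
        · have h' : MeasurableSet (if k ∈ S then C else Cᶜ) := by rw [if_pos hk]; exact hC
          exact h'
        · have h' : MeasurableSet (if k ∈ S then C else Cᶜ) := by rw [if_neg hk]; exact hC.compl
          exact h')
    have hinter : (⋂ j ∈ F, src K X j ⁻¹' sets j) = E m S := by
      rw [hF, Finset.set_biInter_insert]
      congr 1
      rw [Finset.set_biInter_finset_image]
      rfl
    have hprodR : ∏ j ∈ F, P (src K X j ⁻¹' sets j)
        = P (K ⁻¹' {m}) * ∏ k ∈ Finset.range m, P (X k ⁻¹' (if k ∈ S then C else Cᶜ)) := by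
      rw [hF, Finset.prod_insert hnone, Finset.prod_image (by simp)]
      rfl
    have hKm : P (K ⁻¹' {m}) = ENNReal.ofReal (poissonPMFReal r m) := by
      have haem : AEMeasurable K P := by
        by_contra hcon
        have := Measure.map_of_not_aemeasurable hcon
        rw [hK] at this
        have h1 : (poissonMeasure r) Set.univ = 1 := measure_univ
        rw [this] at h1
        simp at h1
      have := Measure.map_apply_of_aemeasurable haem (MeasurableSet.singleton m)
      rw [hK] at this
      rw [← this]
      exact poissonMeasure_singleton r m
    have hXk : ∀ k, P (X k ⁻¹' (if k ∈ S then C else Cᶜ))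
        = if k ∈ S then ENNReal.ofReal p else ENNReal.ofReal (1 - p) := by
      intro k
      by_cases hk : k ∈ S
      · rw [if_pos hk, if_pos hk]; exact hpX k
      · rw [if_neg hk, if_neg hk]; exact hpXc k
    rw [← hinter, hprod, hprodR, hKm]
    rw [mul_assoc]
    congr 1
    calc ∏ k ∈ Finset.range m, P (X k ⁻¹' (if k ∈ S then C else Cᶜ))
        = ∏ k ∈ Finset.range m,
            (if k ∈ S then ENNReal.ofReal p else ENNReal.ofReal (1 - p)) := by
          exact Finset.prod_congr rfl fun k _ => hXk k
      _ = (∏ k ∈ S, ENNReal.ofReal p) *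
            ∏ k ∈ Finset.range m \ S, ENNReal.ofReal (1 - p) := by
          rw [Finset.prod_ite, Finset.filter_mem_eq_inter,
            Finset.inter_eq_right.mpr hSsub, ← Finset.sdiff_eq_filter]
      _ = (ENNReal.ofReal p) ^ S.card * (ENNReal.ofReal (1 - p)) ^ (m - S.card) := by
          rw [Finset.prod_const, Finset.prod_const, Finset.card_sdiff_of_subset hSsub,
            Finset.card_range]
  -- per-term Chernoff-type bound
  set q : ℝ := Real.exp (-s) * p + (1 - p) with hq
  have hq0 : 0 ≤ q := by
    have := Real.exp_nonneg (-s)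
    nlinarith
  have hterm : ∀ m : ℕ, ∀ S ∈ (Finset.range m).powerset,
      P (E' m S) ≤ ENNReal.ofReal (Real.exp (s * t)) * (ENNReal.ofReal (poissonPMFReal r m) *
        ((ENNReal.ofReal (Real.exp (-s) * p)) ^ S.card *
          (ENNReal.ofReal (1 - p)) ^ (m - S.card))) := by
    intro m S hS
    by_cases hlt : (S.card : ℝ) < t
    · have hEeq : E' m S = E m S := if_pos hlt
      rw [hEeq, hmeasE m S hS]
      have h1 : (ENNReal.ofReal p) ^ S.card ≤
          ENNReal.ofReal (Real.exp (s * t)) * (ENNReal.ofReal (Real.exp (-s) * p)) ^ S.card := by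
        have hsplit : (ENNReal.ofReal (Real.exp (-s) * p)) ^ S.card
            = ENNReal.ofReal (Real.exp (-s)) ^ S.card * (ENNReal.ofReal p) ^ S.card := by
          rw [ENNReal.ofReal_mul (Real.exp_nonneg _), mul_pow]
        rw [hsplit, ← mul_assoc]
        conv_lhs => rw [← one_mul ((ENNReal.ofReal p) ^ S.card)]
        have hone : (1 : ℝ≥0∞) ≤ ENNReal.ofReal (Real.exp (s * t)) *
            ENNReal.ofReal (Real.exp (-s)) ^ S.card := by
          rw [← ENNReal.ofReal_pow (Real.exp_nonneg _), ← Real.exp_nat_mul,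
            ← ENNReal.ofReal_mul (Real.exp_nonneg _), ← Real.exp_add]
          rw [ENNReal.one_le_ofReal]
          apply Real.one_le_exp
          have : (S.card : ℝ) ≤ t := le_of_lt hlt
          nlinarith
        exact mul_le_mul_left hone _
      calc ENNReal.ofReal (poissonPMFReal r m) * (ENNReal.ofReal p) ^ S.card *
            (ENNReal.ofReal (1 - p)) ^ (m - S.card)
          ≤ ENNReal.ofReal (poissonPMFReal r m) *
            (ENNReal.ofReal (Real.exp (s * t)) * (ENNReal.ofReal (Real.exp (-s) * p)) ^ S.card) *
            (ENNReal.ofReal (1 - p)) ^ (m - S.card) := by gcongr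
        _ = ENNReal.ofReal (Real.exp (s * t)) * (ENNReal.ofReal (poissonPMFReal r m) *
            ((ENNReal.ofReal (Real.exp (-s) * p)) ^ S.card *
              (ENNReal.ofReal (1 - p)) ^ (m - S.card))) := by ring
    · have hEeq : E' m S = ∅ := if_neg hlt
      rw [hEeq, measure_empty]
      exact zero_le
  have hsum1 : ∀ m : ℕ, ∑ S ∈ (Finset.range m).powerset, P (E' m S)
      ≤ ENNReal.ofReal (Real.exp (s * t) * (poissonPMFReal r m * q ^ m)) := by
    intro m
    calc ∑ S ∈ (Finset.range m).powerset, P (E' m S)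
        ≤ ∑ S ∈ (Finset.range m).powerset,
            ENNReal.ofReal (Real.exp (s * t)) * (ENNReal.ofReal (poissonPMFReal r m) *
              ((ENNReal.ofReal (Real.exp (-s) * p)) ^ S.card *
                (ENNReal.ofReal (1 - p)) ^ (m - S.card))) :=
          Finset.sum_le_sum (hterm m)
      _ = ENNReal.ofReal (Real.exp (s * t)) * (ENNReal.ofReal (poissonPMFReal r m) *
            ∑ S ∈ (Finset.range m).powerset,
              (ENNReal.ofReal (Real.exp (-s) * p)) ^ S.card *
                (ENNReal.ofReal (1 - p)) ^ (m - S.card)) := by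
          rw [← Finset.mul_sum, ← Finset.mul_sum]
      _ = ENNReal.ofReal (Real.exp (s * t)) * (ENNReal.ofReal (poissonPMFReal r m) *
            (ENNReal.ofReal (Real.exp (-s) * p) + ENNReal.ofReal (1 - p)) ^ m) := by
          rw [aux_sum_powerset]
      _ = ENNReal.ofReal (Real.exp (s * t) * (poissonPMFReal r m * q ^ m)) := by
          rw [← ENNReal.ofReal_add (mul_nonneg (Real.exp_nonneg _) hp0) (by linarith), hq,
            ← ENNReal.ofReal_pow hq0, ← ENNReal.ofReal_mul poissonPMFReal_nonneg,
            ← ENNReal.ofReal_mul (Real.exp_nonneg _)]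
  have hgnn : ∀ m : ℕ, 0 ≤ Real.exp (s * t) * (poissonPMFReal r m * q ^ m) := fun m =>
    mul_nonneg (Real.exp_nonneg _) (mul_nonneg poissonPMFReal_nonneg (pow_nonneg hq0 m))
  have hg : ∀ m : ℕ, Real.exp (s * t) * (poissonPMFReal r m * q ^ m)
      = (Real.exp (s * t) * Real.exp (-(r : ℝ))) * (((r : ℝ) * q) ^ m / (Nat.factorial m)) := by
    intro m
    unfold poissonPMFReal
    rw [mul_pow]
    ring
  have hsummable : Summable (fun m : ℕ => Real.exp (s * t) * (poissonPMFReal r m * q ^ m)) := by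
    rw [funext hg]
    exact (Real.summable_pow_div_factorial ((r : ℝ) * q)).mul_left _
  have htsum : ∑' m : ℕ, Real.exp (s * t) * (poissonPMFReal r m * q ^ m)
      = Real.exp (s * t + (r : ℝ) * p * (Real.exp (-s) - 1)) := by
    rw [funext hg, tsum_mul_left]
    have : ∑' m : ℕ, ((r : ℝ) * q) ^ m / (Nat.factorial m) = Real.exp ((r : ℝ) * q) := by
      rw [Real.exp_eq_exp_ℝ]
      exact (NormedSpace.expSeries_div_hasSum_exp ((r : ℝ) * q)).tsum_eq
    rw [this, ← Real.exp_add, ← Real.exp_add, hq]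
    ring_nf
  refine le_trans (measure_mono hsub) ?_
  refine le_trans (measure_iUnion_le _) ?_
  refine le_trans (ENNReal.tsum_le_tsum
    (fun m => le_trans (measure_biUnion_finset_le _ _) (hsum1 m))) ?_
  rw [← ENNReal.ofReal_tsum_of_nonneg hgnn hsummable, htsum]

lemma H_pos {x : ℝ} (h0 : 0 < x) (h1 : x < 1) : 0 < H x := by
  have hlog : Real.log x⁻¹ < x⁻¹ - 1 :=
    Real.log_lt_sub_one_of_pos (by positivity) (by
      intro hcon
      rw [inv_eq_one] at hcon
      exact absurd hcon (ne_of_lt h1))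
  rw [Real.log_inv] at hlog
  unfold H
  nlinarith [mul_lt_mul_of_pos_left hlog h0, mul_inv_cancel₀ (ne_of_gt h0)]

lemma volume_square (n : ℕ) : volume (square n) = ENNReal.ofReal n := by
  rw [square, Measure.volume_eq_prod, Measure.prod_prod, Real.volume_Icc, sub_zero,
    ← ENNReal.ofReal_mul (Real.sqrt_nonneg _), Real.mul_self_sqrt (Nat.cast_nonneg n)]

lemma volume_cell {s : ℝ} (hs : 0 ≤ s) (i j : ℕ) :
    volume (cell s i j) = ENNReal.ofReal (s * s) := by
  rw [cell, Measure.volume_eq_prod, Measure.prod_prod, Real.volume_Ico, Real.volume_Ico]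
  have h : ∀ k : ℕ, ((k : ℝ) + 1) * s - k * s = s := fun k => by ring
  rw [h i, h j, ← ENNReal.ofReal_mul hs]

lemma cell_measurable (s : ℝ) (i j : ℕ) : MeasurableSet (cell s i j) :=
  measurableSet_Ico.prod measurableSet_Ico

/-- Every cell of the tiling of `[0,√n]²` into squares of side `r/√5`,
`r = √(a ln n/π)`, contains at least `γ a ln n` points of a unit-intensity Poisson
point process, whp, provided `a > 5π/H(5πγ)` and `γ ∈ (0, 1/(5π))`. -/
theorem every_cell_dense (a γ : ℝ) (hγ0 : 0 < γ) (hγ1 : γ < 1 / (5 * Real.pi))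
    (haH : 5 * Real.pi / H (5 * Real.pi * γ) < a)
    (Ω : ℕ → Type) (mΩ : ∀ n, MeasurableSpace (Ω n)) (P : ∀ n, Measure (Ω n))
    (hP : ∀ n, IsProbabilityMeasure (P n))
    (K : ∀ n, Ω n → ℕ) (X : ∀ n, ℕ → Ω n → ℝ × ℝ)
    (hindep : ∀ n, iIndepFun (src (K n) (X n)) (P n))
    (hK : ∀ n : ℕ, Measure.map (K n) (P n) = poissonMeasure (n : ℝ≥0))
    (hX : ∀ (n i : ℕ), 0 < n →
      Measure.map (X n i) (P n) = (n : ℝ≥0∞)⁻¹ • volume.restrict (square n)) :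
    Filter.Tendsto
      (fun n : ℕ => P n
        {ω : Ω n |
          ∀ i j : ℕ,
            ((i : ℝ) + 1) * Real.sqrt (a * Real.log n / (5 * Real.pi)) ≤ Real.sqrt n →
            ((j : ℝ) + 1) * Real.sqrt (a * Real.log n / (5 * Real.pi)) ≤ Real.sqrt n →
            γ * a * Real.log n ≤
              (Nat.card {k : ℕ // k < K n ω ∧
                X n k ω ∈ cell (Real.sqrt (a * Real.log n / (5 * Real.pi))) i j} : ℝ)})
      Filter.atTop (nhds 1) := by
  classical
  have hπ : (0:ℝ) < Real.pi := Real.pi_pos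
  have h5π : (0:ℝ) < 5 * Real.pi := by positivity
  set x : ℝ := 5 * Real.pi * γ with hxdef
  have hx0 : 0 < x := by positivity
  have hx1 : x < 1 := by
    have := mul_lt_mul_of_pos_left hγ1 h5π
    rwa [mul_one_div, div_self (ne_of_gt h5π)] at this
  have hHx : 0 < H x := H_pos hx0 hx1
  have ha : 0 < a := lt_trans (by positivity) haH
  set β : ℝ := a * H x / (5 * Real.pi) with hβdef
  have hβ1 : 1 < β := by
    rw [hβdef, lt_div_iff₀ h5π, one_mul]
    exact (div_lt_iff₀ hHx).mp haH
  set b : ℕ → ℝ := fun n => Real.exp ((1 - β) * Real.log n) with hbdef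
  have hlogn : Filter.Tendsto (fun n : ℕ => Real.log n) Filter.atTop Filter.atTop :=
    Real.tendsto_log_atTop.comp tendsto_natCast_atTop_atTop
  have hbtendsto : Filter.Tendsto b Filter.atTop (nhds 0) :=
    Real.tendsto_exp_atBot.comp (hlogn.const_mul_atTop_of_neg (by linarith))
  -- eventual hypotheses
  have hev1 : ∀ᶠ n : ℕ in Filter.atTop, 1 ≤ a * Real.log n / (5 * Real.pi) :=
    (Filter.Tendsto.atTop_div_const h5π (hlogn.const_mul_atTop ha)).eventually_ge_atTop 1
  have hev2 : ∀ᶠ n : ℕ in Filter.atTop, a * Real.log n / (5 * Real.pi) ≤ n := by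
    have hc : (0:ℝ) < 2 * a / (5 * Real.pi) := by positivity
    have hev : ∀ᶠ n : ℕ in Filter.atTop,
        (2 * a / (5 * Real.pi)) ≤ Real.sqrt n ∧ 1 ≤ n := by
      refine Filter.eventually_atTop.mpr
        ⟨max 1 ⌈(2 * a / (5 * Real.pi)) ^ 2⌉₊, fun n hn => ⟨?_, le_trans (le_max_left _ _) hn⟩⟩
      rw [Real.le_sqrt' hc]
      calc (2 * a / (5 * Real.pi)) ^ 2 ≤ (⌈(2 * a / (5 * Real.pi)) ^ 2⌉₊ : ℝ) := Nat.le_ceil _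
        _ ≤ n := Nat.cast_le.mpr (le_trans (le_max_right _ _) hn)
    filter_upwards [hev] with n hn
    obtain ⟨hsq, hn1⟩ := hn
    have hn1' : (1:ℝ) ≤ n := by exact_mod_cast hn1
    have hsqrt1 : (1:ℝ) ≤ Real.sqrt n := Real.one_le_sqrt.mpr hn1'
    have hlog : Real.log n ≤ 2 * (Real.sqrt n - 1) := by
      have h1 : Real.log (Real.sqrt n) ≤ Real.sqrt n - 1 :=
        Real.log_le_sub_one_of_pos (by linarith)
      have h2 : Real.log (Real.sqrt n) = Real.log n / 2 :=
        Real.log_sqrt (by linarith)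
      linarith [h2 ▸ h1]
    have hss : Real.sqrt n * Real.sqrt n = (n:ℝ) := Real.mul_self_sqrt (by linarith)
    have hsq' : 2 * a ≤ Real.sqrt n * (5 * Real.pi) := (div_le_iff₀ h5π).mp hsq
    rw [div_le_iff₀ h5π]
    nlinarith [mul_le_mul_of_nonneg_left hlog (le_of_lt ha),
      mul_le_mul_of_nonneg_right hsq' (Real.sqrt_nonneg (n:ℝ)), hss, ha,
      Real.sqrt_nonneg (n:ℝ)]
  have hmain : ∀ᶠ n : ℕ in Filter.atTop,
      1 - ENNReal.ofReal (b n) ≤ P n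
        {ω : Ω n |
          ∀ i j : ℕ,
            ((i : ℝ) + 1) * Real.sqrt (a * Real.log n / (5 * Real.pi)) ≤ Real.sqrt n →
            ((j : ℝ) + 1) * Real.sqrt (a * Real.log n / (5 * Real.pi)) ≤ Real.sqrt n →
            γ * a * Real.log n ≤
              (Nat.card {k : ℕ // k < K n ω ∧
                X n k ω ∈ cell (Real.sqrt (a * Real.log n / (5 * Real.pi))) i j} : ℝ)} := by
    filter_upwards [hev1, hev2, Filter.eventually_ge_atTop 1] with n hA1 hAn hn1
    have hn0' : 0 < n := hn1
    have hn0 : (0:ℝ) < n := by exact_mod_cast hn0'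
    set L : ℝ := Real.log n with hLdef
    have hL0 : 0 ≤ L := Real.log_nonneg (by exact_mod_cast hn1)
    set A : ℝ := a * L / (5 * Real.pi) with hAdef
    have hA0 : 0 < A := lt_of_lt_of_le one_pos hA1
    set s₀ : ℝ := Real.sqrt A with hs₀def
    have hs₀1 : 1 ≤ s₀ := Real.one_le_sqrt.mpr hA1
    have hs₀0 : 0 < s₀ := lt_of_lt_of_le one_pos hs₀1
    have hs₀sq : s₀ * s₀ = A := Real.mul_self_sqrt (le_of_lt hA0)
    set p : ℝ := A / n with hpdef
    have hp0 : 0 ≤ p := le_of_lt (div_pos hA0 hn0)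
    have hp1 : p ≤ 1 := (div_le_one hn0).mpr hAn
    set t : ℝ := γ * a * L with htdef
    set sc : ℝ := -Real.log x with hscdef
    have hsc : 0 ≤ sc := neg_nonneg.mpr (Real.log_nonpos (le_of_lt hx0) (le_of_lt hx1))
    have hexp_sc : Real.exp (-sc) = x := by rw [hscdef, neg_neg, Real.exp_log hx0]
    have haeX : ∀ k, AEMeasurable (X n k) (P n) := by
      intro k
      by_contra hcon
      have h0 : (P n).map (X n k) = 0 := Measure.map_of_not_aemeasurable hcon
      have h1 := hX n k hn0'
      rw [h0] at h1
      have h2 := congrArg (fun μ : Measure (ℝ × ℝ) => μ Set.univ) h1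
      simp only [Measure.coe_zero, Pi.zero_apply, Measure.smul_apply, smul_eq_mul,
        Measure.restrict_apply MeasurableSet.univ, Set.univ_inter] at h2
      rw [volume_square, ENNReal.ofReal_natCast,
        ENNReal.inv_mul_cancel (by exact_mod_cast hn0'.ne' : (n:ℝ≥0∞) ≠ 0)
          (ENNReal.natCast_ne_top n)] at h2
      exact zero_ne_one h2
    have hmap : ∀ (k : ℕ) (D : Set (ℝ × ℝ)), MeasurableSet D →
        P n (X n k ⁻¹' D) = (n : ℝ≥0∞)⁻¹ * volume (D ∩ square n) := by
      intro k D hD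
      rw [← Measure.map_apply_of_aemeasurable (haeX k) hD, hX n k hn0', Measure.smul_apply,
        Measure.restrict_apply hD, smul_eq_mul]
    have hcellbound : ∀ i j : ℕ,
        ((i:ℝ)+1) * s₀ ≤ Real.sqrt n → ((j:ℝ)+1) * s₀ ≤ Real.sqrt n →
        P n {ω | ((Nat.card {k : ℕ // k < K n ω ∧ X n k ω ∈ cell s₀ i j}):ℝ) < t}
          ≤ ENNReal.ofReal (Real.exp (-(β * L))) := by
      intro i j hvi hvj
      have hCm : MeasurableSet (cell s₀ i j) := cell_measurable _ _ _
      have hCsub : cell s₀ i j ⊆ square n := by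
        rintro ⟨u, v⟩ ⟨⟨hu1, hu2⟩, hv1, hv2⟩
        exact ⟨⟨le_trans (by positivity) hu1, le_trans (le_of_lt hu2) hvi⟩,
          ⟨le_trans (by positivity) hv1, le_trans (le_of_lt hv2) hvj⟩⟩
      have hvolC : volume (cell s₀ i j) = ENNReal.ofReal A := by
        rw [volume_cell (le_of_lt hs₀0), hs₀sq]
      have hpC : ∀ k, P n (X n k ⁻¹' (cell s₀ i j)) = ENNReal.ofReal p := by
        intro k
        rw [hmap k _ hCm, Set.inter_eq_self_of_subset_left hCsub, hvolC, hpdef,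
          ENNReal.ofReal_div_of_pos hn0, div_eq_mul_inv, mul_comm, ENNReal.ofReal_natCast]
      have hpCc : ∀ k, P n (X n k ⁻¹' (cell s₀ i j)ᶜ) = ENNReal.ofReal (1 - p) := by
        intro k
        rw [hmap k _ hCm.compl, ← Set.diff_eq_compl_inter,
          measure_diff hCsub hCm.nullMeasurableSet (by rw [hvolC]; exact ENNReal.ofReal_ne_top),
          volume_square, hvolC, ← ENNReal.ofReal_sub _ (le_of_lt hA0)]
        have h1p : 1 - p = ((n:ℝ) - A) / (n:ℝ) := by
          rw [hpdef]; field_simp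
        rw [h1p, ENNReal.ofReal_div_of_pos hn0, div_eq_mul_inv, mul_comm, ENNReal.ofReal_natCast]
      have hcb := cell_bound (P n) (K n) (X n) (hindep n) (n : ℝ≥0) (hK n) (cell s₀ i j) hCm
        p hp0 hp1 hpC hpCc t sc hsc
      have hexpeq : sc * t + ((n : ℝ≥0) : ℝ) * p * (Real.exp (-sc) - 1) = -(β * L) := by
        rw [hexp_sc]
        have hcast : ((n : ℝ≥0) : ℝ) = (n : ℝ) := by norm_cast
        rw [hcast, hpdef]
        have hnA : (n:ℝ) * (A / (n:ℝ)) = A := by field_simp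
        rw [hnA, htdef, hscdef, hβdef, hAdef, hxdef]
        unfold H
        field_simp
        ring
      rw [hexpeq] at hcb
      exact hcb
    -- counting and union bound
    set M : ℕ := ⌊Real.sqrt n / s₀⌋₊ with hMdef
    set Bad : ℕ → ℕ → Set (Ω n) := fun i j =>
      {ω | ((Nat.card {k : ℕ // k < K n ω ∧ X n k ω ∈ cell s₀ i j}):ℝ) < t} with hBaddef
    set T : ℕ × ℕ → Set (Ω n) := fun q =>
      if (((q.1:ℝ)+1) * s₀ ≤ Real.sqrt n ∧ ((q.2:ℝ)+1) * s₀ ≤ Real.sqrt n)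
        then Bad q.1 q.2 else ∅ with hTdef
    set G : Set (Ω n) :=
      {ω : Ω n | ∀ i j : ℕ,
        ((i : ℝ) + 1) * s₀ ≤ Real.sqrt n → ((j : ℝ) + 1) * s₀ ≤ Real.sqrt n →
        t ≤ (Nat.card {k : ℕ // k < K n ω ∧ X n k ω ∈ cell s₀ i j} : ℝ)} with hGdef
    have hcover : (Set.univ : Set (Ω n)) ⊆ G ∪ ⋃ q : ℕ × ℕ, T q := by
      intro ω _
      by_cases hω : ω ∈ G
      · exact Or.inl hω
      · right
        rw [hGdef] at hω
        simp only [Set.mem_setOf_eq] at hω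
        push_neg at hω
        obtain ⟨i, j, hi, hj, hlt⟩ := hω
        refine Set.mem_iUnion.mpr ⟨(i, j), ?_⟩
        show ω ∈ (if (((i:ℝ)+1) * s₀ ≤ Real.sqrt n ∧ ((j:ℝ)+1) * s₀ ≤ Real.sqrt n)
          then Bad i j else ∅)
        rw [if_pos ⟨hi, hj⟩]
        exact hlt
    have hTbound : ∀ q : ℕ × ℕ, P n (T q) ≤ ENNReal.ofReal (Real.exp (-(β * L))) := by
      intro q
      show P n (if _ then Bad q.1 q.2 else ∅) ≤ _
      by_cases h : (((q.1:ℝ)+1) * s₀ ≤ Real.sqrt n ∧ ((q.2:ℝ)+1) * s₀ ≤ Real.sqrt n)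
      · rw [if_pos h]
        exact hcellbound q.1 q.2 h.1 h.2
      · rw [if_neg h, measure_empty]
        exact zero_le
    have hTzero : ∀ q : ℕ × ℕ, q ∉ (Finset.range M ×ˢ Finset.range M) → P n (T q) = 0 := by
      intro q hq
      show P n (if _ then Bad q.1 q.2 else ∅) = 0
      rw [if_neg, measure_empty]
      intro h
      refine hq (Finset.mem_product.mpr ⟨Finset.mem_range.mpr ?_, Finset.mem_range.mpr ?_⟩)
      · have : q.1 + 1 ≤ M := Nat.le_floor (by
          push_cast
          rw [le_div_iff₀ hs₀0]
          exact h.1)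
        omega
      · have : q.2 + 1 ≤ M := Nat.le_floor (by
          push_cast
          rw [le_div_iff₀ hs₀0]
          exact h.2)
        omega
    have hPT : P n (⋃ q : ℕ × ℕ, T q) ≤ ENNReal.ofReal (b n) := by
      refine le_trans (measure_iUnion_le _) ?_
      rw [tsum_eq_sum hTzero]
      refine le_trans (Finset.sum_le_card_nsmul _ _ _ (fun q _ => hTbound q)) ?_
      rw [Finset.card_product, Finset.card_range, nsmul_eq_mul]
      have hMn : (M:ℝ) * M ≤ (n:ℝ) := by
        have h1 : (M:ℝ) ≤ Real.sqrt n / s₀ := Nat.floor_le (by positivity)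
        have h2 : Real.sqrt n / s₀ * (Real.sqrt n / s₀) = (n:ℝ) / A := by
          rw [div_mul_div_comm, Real.mul_self_sqrt (le_of_lt hn0), hs₀sq]
        calc (M:ℝ) * M ≤ (Real.sqrt n / s₀) * (Real.sqrt n / s₀) :=
              mul_le_mul h1 h1 (Nat.cast_nonneg M) (by positivity)
          _ = (n:ℝ) / A := h2
          _ ≤ (n:ℝ) := div_le_self (le_of_lt hn0) hA1
      calc ((M * M : ℕ) : ℝ≥0∞) * ENNReal.ofReal (Real.exp (-(β * L)))
          = ENNReal.ofReal (((M * M : ℕ) : ℝ) * Real.exp (-(β * L))) := by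
            rw [ENNReal.ofReal_mul (Nat.cast_nonneg _), ENNReal.ofReal_natCast]
        _ ≤ ENNReal.ofReal (b n) := by
            apply ENNReal.ofReal_le_ofReal
            have hbn : b n = (n:ℝ) * Real.exp (-(β * L)) := by
              rw [hbdef]
              show Real.exp ((1 - β) * L) = (n:ℝ) * Real.exp (-(β * L))
              rw [show (1 - β) * L = L + -(β * L) by ring, Real.exp_add, hLdef,
                Real.exp_log hn0]
            rw [hbn]
            push_cast
            exact mul_le_mul_of_nonneg_right hMn (Real.exp_nonneg _)
    have h1le : (1 : ℝ≥0∞) ≤ P n G + ENNReal.ofReal (b n) :=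
      calc (1 : ℝ≥0∞) = P n Set.univ := measure_univ.symm
        _ ≤ P n (G ∪ ⋃ q : ℕ × ℕ, T q) := measure_mono hcover
        _ ≤ P n G + P n (⋃ q : ℕ × ℕ, T q) := measure_union_le _ _
        _ ≤ P n G + ENNReal.ofReal (b n) := add_le_add_right hPT _
    exact tsub_le_iff_right.mpr h1le
  have hupper : ∀ᶠ n : ℕ in Filter.atTop,
      P n {ω : Ω n |
          ∀ i j : ℕ,
            ((i : ℝ) + 1) * Real.sqrt (a * Real.log n / (5 * Real.pi)) ≤ Real.sqrt n →
            ((j : ℝ) + 1) * Real.sqrt (a * Real.log n / (5 * Real.pi)) ≤ Real.sqrt n →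
            γ * a * Real.log n ≤
              (Nat.card {k : ℕ // k < K n ω ∧
                X n k ω ∈ cell (Real.sqrt (a * Real.log n / (5 * Real.pi))) i j} : ℝ)}
        ≤ 1 :=
    Filter.Eventually.of_forall fun n => prob_le_one
  have hlowtend : Filter.Tendsto (fun n : ℕ => 1 - ENNReal.ofReal (b n))
      Filter.atTop (nhds 1) := by
    have h0 : Filter.Tendsto (fun n : ℕ => ENNReal.ofReal (b n)) Filter.atTop (nhds 0) := by
      have := ENNReal.tendsto_ofReal hbtendsto
      rwa [ENNReal.ofReal_zero] at this
    have := ENNReal.Tendsto.sub (tendsto_const_nhds (x := (1:ℝ≥0∞))) h0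
      (Or.inl ENNReal.one_ne_top)
    rwa [tsub_zero] at this
  exact tendsto_of_tendsto_of_tendsto_of_le_of_le' hlowtend tendsto_const_nhds hmain hupper
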